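/- In the category of sets, the functor F(X) = 2 × X^A (deterministic automata over alphabet A) has a final coalgebra with carrier the powerset P(A*) of languages over A, with output L ↦ (ε ∈ L) and transitions δ(L, a) = { u ∈ A* | a·u ∈ L }. Moreover, for any automaton with states X, transition δ : X × A → X, and accepting states U ⊆ X, the unique coalgebra morphism sends a state x to the language { u ∈ A* | δ*(x,u) ∈ U }, where δ* is the extension of δ to words. -/

import Mathlib

/-- Extension of a transition function `δ : X → A → X` to words:
`δ*(x, ε) = x` and `δ*(x, a·u) = δ*(δ(x,a), u)`. -/
def deltaStar {X A : Type*} (δ : X → A → X) : X → List A → X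
  | x, [] => x
  | x, a :: u => deltaStar δ (δ x a) u

/-- The powerset `P(A*)` of languages is the final deterministic automaton:
with output `L ↦ (ε ∈ L)` and transitions `δ(L,a) = {u | a·u ∈ L}`, for any
automaton `(X, δ, U)` the map `x ↦ {u | δ*(x,u) ∈ U}` is the unique
coalgebra morphism into it. -/
theorem final_deterministic_automaton {X A : Type*}
    (δ : X → A → X) (U : Set X) :
    -- the behaviour map is a coalgebra morphism:
    (∀ x : X, (([] : List A) ∈ {u : List A | deltaStar δ x u ∈ U} ↔ x ∈ U)) ∧
    (∀ x : X, ∀ a : A,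
      {u : List A | a :: u ∈ {v : List A | deltaStar δ x v ∈ U}} =
      {u : List A | deltaStar δ (δ x a) u ∈ U}) ∧
    -- uniqueness: any coalgebra morphism equals the behaviour map:
    (∀ h : X → Set (List A),
      (∀ x : X, (([] : List A) ∈ h x ↔ x ∈ U)) →
      (∀ x : X, ∀ a : A, {u : List A | a :: u ∈ h x} = h (δ x a)) →
      h = fun x => {u : List A | deltaStar δ x u ∈ U}) := by
  refine ⟨fun x => Iff.rfl, fun x a => rfl, fun h h0 hstep => ?_⟩
  funext x
  ext u
  induction u generalizing x with
  | nil => simpa [deltaStar] using h0 x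
  | cons a u ih =>
    have := Set.ext_iff.mp (hstep x a) u
    simp only [Set.mem_setOf_eq] at this ⊢
    rw [this]; simpa [deltaStar] using ih (δ x a)
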